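/- For 0 < μ ≤ 1, λ > 0, and s > λ^{1/μ}, the Laplace transform of t ↦ λ t^{μ−1} E_{μ,μ}(−λ t^μ) equals λ/(s^μ + λ). -/

import Mathlib

open MeasureTheory

/-- The two-parameter Mittag-Leffler function `E_{α,β}(z) = Σ z^k / Γ(αk + β)`. -/
noncomputable def mittagLeffler (α β z : ℝ) : ℝ :=
  ∑' k : ℕ, z ^ k / Real.Gamma (α * k + β)

lemma aux_integrable {a r : ℝ} (ha : 0 < a) (hr : 0 < r) :
    IntegrableOn (fun t : ℝ => t ^ (a - 1) * Real.exp (-(r * t))) (Set.Ioi 0) := by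
  have h := integrableOn_rpow_mul_exp_neg_mul_rpow (by linarith : (-1:ℝ) < a - 1) (zero_lt_one : (0:ℝ) < 1) hr
  refine h.congr_fun (fun t ht => ?_) measurableSet_Ioi
  beta_reduce
  rw [Real.rpow_one, neg_mul]

/-- For `0 < μ ≤ 1`, `λ > 0`, and `s > λ^{1/μ}`, the Laplace transform of
`t ↦ λ t^{μ−1} E_{μ,μ}(−λ t^μ)` equals `λ/(s^μ + λ)`. -/
theorem stmt9 (mu lam s : ℝ) (hmu0 : 0 < mu) (hmu1 : mu ≤ 1) (hlam : 0 < lam)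
    (hs : lam ^ (1 / mu) < s) :
    ∫ t in Set.Ioi (0 : ℝ),
        Real.exp (-s * t) * (lam * t ^ (mu - 1) * mittagLeffler mu mu (-lam * t ^ mu))
      = lam / (s ^ mu + lam) := by
  have hs0 : (0:ℝ) < s := lt_trans (Real.rpow_pos_of_pos hlam _) hs
  have hsm : lam < s ^ mu := by
    have h1 : (lam ^ (1 / mu)) ^ mu < s ^ mu :=
      Real.rpow_lt_rpow (Real.rpow_pos_of_pos hlam _).le hs hmu0
    rwa [← Real.rpow_mul hlam.le, one_div_mul_cancel hmu0.ne', Real.rpow_one] at h1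
  have hsmpos : (0:ℝ) < s ^ mu := Real.rpow_pos_of_pos hs0 _
  -- the ratio
  set q : ℝ := lam * (1 / s) ^ mu with hq
  have hinv : (1 / s : ℝ) ^ mu = (s ^ mu)⁻¹ := by
    rw [one_div, ← Real.rpow_neg_one, ← Real.rpow_mul hs0.le, mul_comm,
      Real.rpow_mul hs0.le, Real.rpow_neg_one]
  have hq_eq : q = lam / s ^ mu := by rw [hq, hinv, div_eq_mul_inv]
  have hq0 : 0 ≤ q := by rw [hq_eq]; positivity
  have hq1 : q < 1 := by
    rw [hq_eq, div_lt_one hsmpos]; exact hsm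
  -- the summands
  set F : ℕ → ℝ → ℝ := fun k t =>
    (lam * (-lam) ^ k / Real.Gamma (mu * (k + 1))) *
      (t ^ (mu * (k + 1) - 1) * Real.exp (-(s * t))) with hF
  have hak : ∀ k : ℕ, (0:ℝ) < mu * (k + 1) := fun k => by positivity
  have hGpos : ∀ k : ℕ, 0 < Real.Gamma (mu * (k + 1)) :=
    fun k => Real.Gamma_pos_of_pos (hak k)
  -- integrability of each F k
  have hFint : ∀ k : ℕ, IntegrableOn (F k) (Set.Ioi 0) := fun k =>
    (aux_integrable (hak k) hs0).const_mul _
  -- value of each integral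
  have hval : ∀ k : ℕ, ∫ t in Set.Ioi (0:ℝ), F k t
      = (lam * (-lam) ^ k) * ((1 / s) ^ (mu * (k + 1))) := by
    intro k
    rw [hF]
    simp only
    rw [integral_const_mul, Real.integral_rpow_mul_exp_neg_mul_Ioi (hak k) hs0]
    field_simp
  -- the norm integrals are summable
  have hnorm : ∀ k : ℕ, ∫ t in Set.Ioi (0:ℝ), ‖F k t‖
      = (lam * lam ^ k / Real.Gamma (mu * (k + 1))) *
        ((1 / s) ^ (mu * (k + 1)) * Real.Gamma (mu * (k + 1))) := by
    intro k
    rw [← Real.integral_rpow_mul_exp_neg_mul_Ioi (hak k) hs0, ← integral_const_mul]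
    refine setIntegral_congr_fun measurableSet_Ioi (fun t ht => ?_)
    have ht0 : (0:ℝ) < t := ht
    rw [hF]
    simp only
    rw [norm_mul, norm_mul, Real.norm_eq_abs, Real.norm_eq_abs, Real.norm_eq_abs,
      abs_of_nonneg (Real.rpow_nonneg ht0.le _), abs_of_nonneg (Real.exp_pos _).le,
      abs_div, abs_mul, abs_of_pos hlam, abs_pow, abs_neg, abs_of_pos hlam,
      abs_of_pos (hGpos k)]
  have hgeom : ∀ k : ℕ, (1 / s : ℝ) ^ (mu * (k + 1)) = ((s ^ mu)⁻¹) ^ (k + 1) := by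
    intro k
    rw [show (mu * (k + 1) : ℝ) = mu * ((k:ℝ) + 1) by push_cast; ring,
      Real.rpow_mul (by positivity : (0:ℝ) ≤ 1 / s), hinv,
      show ((k:ℝ) + 1) = ((k + 1 : ℕ) : ℝ) by push_cast; ring,
      Real.rpow_natCast]
  have hsummable : Summable fun k : ℕ => ∫ t in Set.Ioi (0:ℝ), ‖F k t‖ := by
    have : ∀ k : ℕ, (∫ t in Set.Ioi (0:ℝ), ‖F k t‖) = q * q ^ k := by
      intro k
      rw [hnorm k, hgeom k, hq, hinv, mul_pow, pow_succ]
      field_simp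
    simp_rw [this]
    exact (summable_geometric_of_lt_one hq0 hq1).mul_left _
  -- the pointwise identity
  have hpt : ∀ t ∈ Set.Ioi (0:ℝ),
      Real.exp (-s * t) * (lam * t ^ (mu - 1) * mittagLeffler mu mu (-lam * t ^ mu))
        = ∑' k : ℕ, F k t := by
    intro t ht
    have ht0 : (0:ℝ) < t := ht
    rw [mittagLeffler, ← tsum_mul_left, ← tsum_mul_left]
    refine tsum_congr (fun k => ?_)
    rw [hF]
    simp only
    have h1 : (-lam * t ^ mu) ^ k = (-lam) ^ k * t ^ (mu * k) := by
      rw [mul_pow, ← Real.rpow_natCast (t ^ mu) k, ← Real.rpow_mul ht0.le]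
    have h2 : t ^ (mu - 1) * t ^ (mu * k) = t ^ (mu * (k + 1) - 1) := by
      rw [← Real.rpow_add ht0, show mu - 1 + mu * k = mu * (k + 1) - 1 by push_cast; ring]
    have h3 : mu * (k:ℝ) + mu = mu * ((k:ℝ) + 1) := by ring
    rw [h1, h3, neg_mul, Real.exp_neg, ← h2]
    ring
  calc ∫ t in Set.Ioi (0 : ℝ),
        Real.exp (-s * t) * (lam * t ^ (mu - 1) * mittagLeffler mu mu (-lam * t ^ mu))
      = ∫ t in Set.Ioi (0:ℝ), ∑' k : ℕ, F k t :=
        setIntegral_congr_fun measurableSet_Ioi hpt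
    _ = ∑' k : ℕ, ∫ t in Set.Ioi (0:ℝ), F k t :=
        (integral_tsum_of_summable_integral_norm hFint hsummable).symm
    _ = lam / (s ^ mu + lam) := by
        have hr : |(-lam) * (s ^ mu)⁻¹| < 1 := by
          rw [abs_mul, abs_neg, abs_of_pos hlam, abs_of_pos (inv_pos.mpr hsmpos)]
          rw [← div_eq_mul_inv, div_lt_one hsmpos]; exact hsm
        have : ∀ k : ℕ, (∫ t in Set.Ioi (0:ℝ), F k t)
            = (lam * (s ^ mu)⁻¹) * ((-lam) * (s ^ mu)⁻¹) ^ k := by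
          intro k
          rw [hval k, hgeom k, pow_succ, mul_pow]
          ring
        simp_rw [this]
        rw [tsum_mul_left, tsum_geometric_of_abs_lt_one hr]
        rw [neg_mul, sub_neg_eq_add]
        field_simp
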